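/- arXiv:2508.20739 — 2 statements merged into one kernel-verified Lean document; each statement's English description precedes it below -/
import Mathlib

section
/- Given an ERS Ɛ and a graph X colored by the colors of Ɛ, let X' be the full ERS expansion of X. Then the VERS expansion (with respect to the associated VERS R_Ɛ) of the barycentric subdivision of X equals the barycentric subdivision of X'. Consequently, for every n ≥ 1, the n-th VERS expansion Γ_n of R_Ɛ is the barycentric subdivision of the n-th graph Ɛ_n of the full expansion sequence of Ɛ. -/
/-- A graph colored by `C`. -/
structure Gph (C : Type) where
  V : Type
  Ed : Type
  src : Ed → V
  tgt : Ed → V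
  col : Ed → C

section ERS

variable {C : Type} (E₀ : Gph C) (X : C → Gph C)
  (ic tc : ∀ c, (X c).V) [∀ c, DecidableEq (X c).V]

def ersAttach (Y : Gph C) (e : Y.Ed) (w : (X (Y.col e)).V) :
    Y.V ⊕ (Σ e : Y.Ed, { v : (X (Y.col e)).V // v ≠ ic (Y.col e) ∧ v ≠ tc (Y.col e) }) :=
  if h1 : w = ic (Y.col e) then Sum.inl (Y.src e)
  else if h2 : w = tc (Y.col e) then Sum.inl (Y.tgt e)
  else Sum.inr ⟨e, w, h1, h2⟩

/-- The full ERS expansion of a colored graph. -/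
def ersExpand (Y : Gph C) : Gph C where
  V := Y.V ⊕ (Σ e : Y.Ed, { v : (X (Y.col e)).V // v ≠ ic (Y.col e) ∧ v ≠ tc (Y.col e) })
  Ed := Σ e : Y.Ed, (X (Y.col e)).Ed
  src := fun p => ersAttach X ic tc Y p.1 ((X (Y.col p.1)).src p.2)
  tgt := fun p => ersAttach X ic tc Y p.1 ((X (Y.col p.1)).tgt p.2)
  col := fun p => (X (Y.col p.1)).col p.2

/-- The full expansion sequence `Ɛ₁, Ɛ₂, …` (`ersIter k = Ɛ_{k+1}`). -/
def ersIter : ℕ → Gph C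
  | 0 => E₀
  | k + 1 => ersExpand X ic tc (ersIter k)

/-- Belk–Forrest's expanding conditions. -/
def ExpandingERS : Prop :=
  (∀ v : E₀.V, ∃ e, E₀.src e = v ∨ E₀.tgt e = v) ∧
  (∀ c, ∀ v : (X c).V, ∃ e, (X c).src e = v ∨ (X c).tgt e = v) ∧
  (∀ c, ∃ v : (X c).V, v ≠ ic c ∧ v ≠ tc c) ∧
  (∀ c, ∀ e : (X c).Ed,
    ¬ (((X c).src e = ic c ∧ (X c).tgt e = tc c) ∨
      ((X c).src e = tc c ∧ (X c).tgt e = ic c)))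

end ERS

/-- Colors of the VERS `R_Ɛ`: `none` is `c₀`, `some (inl c)` is `c_ι` and
`some (inr c)` is `c_τ`. -/
abbrev VCol (C : Type) : Type := Option (C ⊕ C)

/-- Types of the VERS `R_Ɛ`: `none` is the start type `s`, `some none` is the
vertex type, `some (some c)` is the type `c`. -/
abbrev VTyp (C : Type) : Type := Option (Option C)

/-- A graph colored by the VERS colors and typed by the VERS types. -/
structure VGraph (C : Type) where
  V : Type
  Ed : Type
  src : Ed → V
  tgt : Ed → V
  col : Ed → VCol C
  typ : V → VTyp C

/-- `κ`-compatibility for the VERS `R_Ɛ`: `c₀` joins `s` to `s`, `c_ι` joins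
the vertex type to `c`, and `c_τ` joins `c` to the vertex type. -/
def VCompat {C : Type} (G : VGraph C) : Prop :=
  ∀ e, match G.col e with
  | none => G.typ (G.src e) = none ∧ G.typ (G.tgt e) = none
  | some (Sum.inl c) => G.typ (G.src e) = some none ∧ G.typ (G.tgt e) = some (some c)
  | some (Sum.inr c) => G.typ (G.src e) = some (some c) ∧ G.typ (G.tgt e) = some none

/-- The letters of the initial edge shift of `R_Ɛ`. -/
def LetterRaw {C : Type} (E₀ : Gph C) (X : C → Gph C) (ic tc : ∀ c, (X c).V) : Type :=
  (E₀.V ⊕ E₀.Ed) ⊕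
    (Unit ⊕ Σ c : C, ({ v : (X c).V // v ≠ ic c ∧ v ≠ tc c } ⊕ (X c).Ed))

/-- Which letters may follow a word of a given type. -/
def LetterOK {C : Type} {E₀ : Gph C} {X : C → Gph C} {ic tc : ∀ c, (X c).V} :
    VTyp C → LetterRaw E₀ X ic tc → Prop
  | none, Sum.inl _ => True
  | some none, Sum.inr (Sum.inl _) => True
  | some (some c), Sum.inr (Sum.inr p) => p.1 = c
  | _, _ => False

/-- The type of (a word ending with) a letter. -/
def letterTyp {C : Type} {E₀ : Gph C} {X : C → Gph C} {ic tc : ∀ c, (X c).V} :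
    LetterRaw E₀ X ic tc → VTyp C
  | Sum.inl (Sum.inl _) => some none
  | Sum.inl (Sum.inr g) => some (some (E₀.col g))
  | Sum.inr (Sum.inl _) => some none
  | Sum.inr (Sum.inr p) =>
      match p.2 with
      | Sum.inl _ => some none
      | Sum.inr g => some (some ((X p.1).col g))

/-- The vertices of the VERS expansion of `G`. -/
def VexV {C : Type} (E₀ : Gph C) (X : C → Gph C) (ic tc : ∀ c, (X c).V)
    (G : VGraph C) : Type :=
  Σ u : G.V, { x : LetterRaw E₀ X ic tc // LetterOK (G.typ u) x }

/-- The halves of the barycentric subdivision of `X c`. -/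
def halfSrcV {C : Type} (X : C → Gph C) (c : C) :
    (X c).Ed ⊕ (X c).Ed → (X c).V ⊕ (X c).Ed
  | Sum.inl g => Sum.inl ((X c).src g)
  | Sum.inr g => Sum.inr g

def halfTgtV {C : Type} (X : C → Gph C) (c : C) :
    (X c).Ed ⊕ (X c).Ed → (X c).V ⊕ (X c).Ed
  | Sum.inl g => Sum.inr g
  | Sum.inr g => Sum.inl ((X c).tgt g)

def half0Src {C : Type} (E₀ : Gph C) : E₀.Ed ⊕ E₀.Ed → E₀.V ⊕ E₀.Ed
  | Sum.inl g => Sum.inl (E₀.src g)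
  | Sum.inr g => Sum.inr g

def half0Tgt {C : Type} (E₀ : Gph C) : E₀.Ed ⊕ E₀.Ed → E₀.V ⊕ E₀.Ed
  | Sum.inl g => Sum.inr g
  | Sum.inr g => Sum.inl (E₀.tgt g)

/-- The edges of the VERS expansion of `G`. -/
inductive VexEd {C : Type} (E₀ : Gph C) (X : C → Gph C)
    (P : ∀ c : C, (X c).Ed ⊕ (X c).Ed → Bool) (G : VGraph C) : Type where
  | e0 (e : G.Ed) (hcol : G.col e = none)
      (hs : G.typ (G.src e) = none) (ht : G.typ (G.tgt e) = none)
      (f : E₀.Ed ⊕ E₀.Ed) : VexEd E₀ X P G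
  | eι (e : G.Ed) (c : C) (hcol : G.col e = some (Sum.inl c))
      (hs : G.typ (G.src e) = some none) (ht : G.typ (G.tgt e) = some (some c))
      (f : (X c).Ed ⊕ (X c).Ed) (hf : P c f = true) : VexEd E₀ X P G
  | eτ (e : G.Ed) (c : C) (hcol : G.col e = some (Sum.inr c))
      (hs : G.typ (G.src e) = some (some c)) (ht : G.typ (G.tgt e) = some none)
      (f : (X c).Ed ⊕ (X c).Ed) (hf : P c f = false) : VexEd E₀ X P G

section Attach

variable {C : Type} (E₀ : Gph C) (X : C → Gph C) (ic tc : ∀ c, (X c).V)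
  [∀ c, DecidableEq (X c).V] (Q0 : E₀.V ⊕ E₀.Ed → Bool) {G : VGraph C}

/-- Attaching an endpoint of a half-edge of `R_{c₀}`. -/
def attach0 (e : G.Ed) (hs : G.typ (G.src e) = none) (ht : G.typ (G.tgt e) = none)
    (w : E₀.V ⊕ E₀.Ed) : VexV E₀ X ic tc G :=
  ⟨if Q0 w then G.src e else G.tgt e, ⟨Sum.inl w, by
    split
    · rw [hs]; trivial
    · rw [ht]; trivial⟩⟩

/-- The letter of the new vertex produced by a vertex `x` of `X c`. -/
def attachL (c : C) (x : (X c).V) : LetterRaw E₀ X ic tc :=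
  if h1 : x = ic c then Sum.inr (Sum.inl ())
  else if h2 : x = tc c then Sum.inr (Sum.inl ())
  else Sum.inr (Sum.inr ⟨c, Sum.inl ⟨x, h1, h2⟩⟩)

theorem letterTyp_attachL (c : C) (x : (X c).V) :
    letterTyp (attachL E₀ X ic tc c x) = some none := by
  by_cases h1 : x = ic c
  · rw [show attachL E₀ X ic tc c x = Sum.inr (Sum.inl ()) from dif_pos h1]; rfl
  · by_cases h2 : x = tc c
    · rw [show attachL E₀ X ic tc c x = Sum.inr (Sum.inl ()) from
        (dif_neg h1).trans (dif_pos h2)]; rfl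
    · rw [show attachL E₀ X ic tc c x = Sum.inr (Sum.inr ⟨c, Sum.inl ⟨x, h1, h2⟩⟩) from
        (dif_neg h1).trans (dif_neg h2)]; rfl

theorem letterOK_attachL (c : C) (x : (X c).V)
    (h : ¬(x = ic c ∨ x = tc c)) :
    LetterOK (some (some c)) (attachL E₀ X ic tc c x) := by
  push_neg at h
  rw [show attachL E₀ X ic tc c x = Sum.inr (Sum.inr ⟨c, Sum.inl ⟨x, h.1, h.2⟩⟩) from
    (dif_neg h.1).trans (dif_neg h.2)]
  rfl

theorem letterOK_attachL_V (c : C) (x : (X c).V)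
    (h : x = ic c ∨ x = tc c) :
    LetterOK (C := C) (some none) (attachL E₀ X ic tc c x) := by
  unfold attachL
  rcases h with h | h <;> split_ifs <;> simp_all [LetterOK]

/-- Attaching an endpoint of a half-edge of `R_{c_ι}`. -/
def attachι (e : G.Ed) (c : C) (hs : G.typ (G.src e) = some none)
    (ht : G.typ (G.tgt e) = some (some c)) :
    (X c).V ⊕ (X c).Ed → VexV E₀ X ic tc G
  | Sum.inl x =>
      if h : x = ic c ∨ x = tc c then
        ⟨G.src e, ⟨attachL E₀ X ic tc c x, by
          rw [hs]
          exact letterOK_attachL_V E₀ X ic tc c x h⟩⟩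
      else
        ⟨G.tgt e, ⟨attachL E₀ X ic tc c x, by
          rw [ht]; exact letterOK_attachL E₀ X ic tc c x h⟩⟩
  | Sum.inr g => ⟨G.tgt e, ⟨Sum.inr (Sum.inr ⟨c, Sum.inr g⟩), by rw [ht]; rfl⟩⟩

/-- Attaching an endpoint of a half-edge of `R_{c_τ}`. -/
def attachτ (e : G.Ed) (c : C) (hs : G.typ (G.src e) = some (some c))
    (ht : G.typ (G.tgt e) = some none) :
    (X c).V ⊕ (X c).Ed → VexV E₀ X ic tc G
  | Sum.inl x =>
      if h : x = ic c ∨ x = tc c then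
        ⟨G.tgt e, ⟨attachL E₀ X ic tc c x, by
          rw [ht]
          exact letterOK_attachL_V E₀ X ic tc c x h⟩⟩
      else
        ⟨G.src e, ⟨attachL E₀ X ic tc c x, by
          rw [hs]; exact letterOK_attachL E₀ X ic tc c x h⟩⟩
  | Sum.inr g => ⟨G.src e, ⟨Sum.inr (Sum.inr ⟨c, Sum.inr g⟩), by rw [hs]; rfl⟩⟩

theorem letterTyp_attachι_vert (e : G.Ed) (c : C)
    (hs : G.typ (G.src e) = some none) (ht : G.typ (G.tgt e) = some (some c))
    (x : (X c).V) :
    letterTyp ((attachι E₀ X ic tc e c hs ht (Sum.inl x)).2.1 :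
      LetterRaw E₀ X ic tc) = some none := by
  by_cases h : x = ic c ∨ x = tc c
  · rw [show attachι E₀ X ic tc e c hs ht (Sum.inl x) = _ from dif_pos h]
    exact letterTyp_attachL E₀ X ic tc c x
  · rw [show attachι E₀ X ic tc e c hs ht (Sum.inl x) = _ from dif_neg h]
    exact letterTyp_attachL E₀ X ic tc c x

theorem letterTyp_attachτ_vert (e : G.Ed) (c : C)
    (hs : G.typ (G.src e) = some (some c)) (ht : G.typ (G.tgt e) = some none)
    (x : (X c).V) :
    letterTyp ((attachτ E₀ X ic tc e c hs ht (Sum.inl x)).2.1 :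
      LetterRaw E₀ X ic tc) = some none := by
  by_cases h : x = ic c ∨ x = tc c
  · rw [show attachτ E₀ X ic tc e c hs ht (Sum.inl x) = _ from dif_pos h]
    exact letterTyp_attachL E₀ X ic tc c x
  · rw [show attachτ E₀ X ic tc e c hs ht (Sum.inl x) = _ from dif_neg h]
    exact letterTyp_attachL E₀ X ic tc c x

end Attach

/-- The VERS expansion of a graph colored and typed as in `R_Ɛ`. -/
def vexpand2 {C : Type} (E₀ : Gph C) (X : C → Gph C) (ic tc : ∀ c, (X c).V)
    [∀ c, DecidableEq (X c).V]
    (P : ∀ c : C, (X c).Ed ⊕ (X c).Ed → Bool) (Q0 : E₀.V ⊕ E₀.Ed → Bool)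
    (G : VGraph C) : VGraph C where
  V := VexV E₀ X ic tc G
  Ed := VexEd E₀ X P G
  src := fun f =>
    match f with
    | .e0 e _ hs ht f => attach0 E₀ X ic tc Q0 e hs ht (half0Src E₀ f)
    | .eι e c _ hs ht f _ => attachι E₀ X ic tc e c hs ht (halfSrcV X c f)
    | .eτ e c _ hs ht f _ => attachτ E₀ X ic tc e c hs ht (halfSrcV X c f)
  tgt := fun f =>
    match f with
    | .e0 e _ hs ht f => attach0 E₀ X ic tc Q0 e hs ht (half0Tgt E₀ f)
    | .eι e c _ hs ht f _ => attachι E₀ X ic tc e c hs ht (halfTgtV X c f)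
    | .eτ e c _ hs ht f _ => attachτ E₀ X ic tc e c hs ht (halfTgtV X c f)
  col := fun f =>
    match f with
    | .e0 _ _ _ _ (Sum.inl g) => some (Sum.inl (E₀.col g))
    | .e0 _ _ _ _ (Sum.inr g) => some (Sum.inr (E₀.col g))
    | .eι _ c _ _ _ (Sum.inl g) _ => some (Sum.inl ((X c).col g))
    | .eι _ c _ _ _ (Sum.inr g) _ => some (Sum.inr ((X c).col g))
    | .eτ _ c _ _ _ (Sum.inl g) _ => some (Sum.inl ((X c).col g))
    | .eτ _ c _ _ _ (Sum.inr g) _ => some (Sum.inr ((X c).col g))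
  typ := fun u => letterTyp u.2.1

/-- The expansion is always `κ`-compatible. -/
theorem vcompat_vexpand2 {C : Type} (E₀ : Gph C) (X : C → Gph C)
    (ic tc : ∀ c, (X c).V) [∀ c, DecidableEq (X c).V]
    (P : ∀ c : C, (X c).Ed ⊕ (X c).Ed → Bool) (Q0 : E₀.V ⊕ E₀.Ed → Bool)
    (G : VGraph C) : VCompat (vexpand2 E₀ X ic tc P Q0 G) := by
  rintro (⟨e, hcol, hs, ht, (g | g)⟩ | ⟨e, c, hcol, hs, ht, (g | g), hf⟩ |
    ⟨e, c, hcol, hs, ht, (g | g), hf⟩) <;>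
    constructor <;>
    simp only [vexpand2, attach0, half0Src, half0Tgt, halfSrcV, halfTgtV] <;>
    first
      | rfl
      | exact letterTyp_attachι_vert E₀ X ic tc _ _ _ _ _
      | exact letterTyp_attachτ_vert E₀ X ic tc _ _ _ _ _

/-- Iterated VERS expansion. -/
def vexpandIter {C : Type} (E₀ : Gph C) (X : C → Gph C) (ic tc : ∀ c, (X c).V)
    [∀ c, DecidableEq (X c).V]
    (P : ∀ c : C, (X c).Ed ⊕ (X c).Ed → Bool) (Q0 : E₀.V ⊕ E₀.Ed → Bool) :
    ℕ → VGraph C → VGraph C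
  | 0, G => G
  | n + 1, G => vexpand2 E₀ X ic tc P Q0 (vexpandIter E₀ X ic tc P Q0 n G)

/-- The base vertex underlying a vertex of the `n`-th expansion. -/
def baseVex {C : Type} (E₀ : Gph C) (X : C → Gph C) (ic tc : ∀ c, (X c).V)
    [∀ c, DecidableEq (X c).V]
    (P : ∀ c : C, (X c).Ed ⊕ (X c).Ed → Bool) (Q0 : E₀.V ⊕ E₀.Ed → Bool) :
    (n : ℕ) → (G : VGraph C) → (vexpandIter E₀ X ic tc P Q0 n G).V → G.V
  | 0, _, v => v
  | n + 1, G, v => baseVex E₀ X ic tc P Q0 n G v.1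

/-- An isomorphism of colored typed graphs. -/
structure VIso {C : Type} (G H : VGraph C) where
  vEquiv : G.V ≃ H.V
  eEquiv : G.Ed ≃ H.Ed
  src_ok : ∀ e, H.src (eEquiv e) = vEquiv (G.src e)
  tgt_ok : ∀ e, H.tgt (eEquiv e) = vEquiv (G.tgt e)
  col_ok : ∀ e, H.col (eEquiv e) = G.col e
  typ_ok : ∀ v, H.typ (vEquiv v) = G.typ v

/-- The barycentric subdivision of a `C`-colored graph, as a graph colored by
the VERS colors `C_ι ⊕ C_τ` and typed by the VERS types. -/
def bary2 {C : Type} (Y : Gph C) : VGraph C where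
  V := Y.V ⊕ Y.Ed
  Ed := Y.Ed ⊕ Y.Ed
  src := fun f =>
    match f with
    | Sum.inl e => Sum.inl (Y.src e)
    | Sum.inr e => Sum.inr e
  tgt := fun f =>
    match f with
    | Sum.inl e => Sum.inr e
    | Sum.inr e => Sum.inl (Y.tgt e)
  col := fun f =>
    match f with
    | Sum.inl e => some (Sum.inl (Y.col e))
    | Sum.inr e => some (Sum.inr (Y.col e))
  typ := fun v =>
    match v with
    | Sum.inl _ => some none
    | Sum.inr e => some (some (Y.col e))

theorem bary2_vcompat {C : Type} (Y : Gph C) : VCompat (bary2 Y) := by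
  rintro (e | e) <;> exact ⟨rfl, rfl⟩

/-- The base graph `Γ₀` of the VERS `R_Ɛ`: a single `c₀`-colored loop. -/
def Gamma0 (C : Type) : VGraph C where
  V := PUnit
  Ed := PUnit
  src := fun _ => PUnit.unit
  tgt := fun _ => PUnit.unit
  col := fun _ => none
  typ := fun _ => none

section MainAux

variable {C : Type} (E₀ : Gph C) (X : C → Gph C) (ic tc : ∀ c, (X c).V)
  [∀ c, DecidableEq (X c).V]

theorem vexV_mk_eq {G : VGraph C} {u u' : G.V} (h : u = u')
    (x : LetterRaw E₀ X ic tc) (hx : LetterOK (G.typ u) x)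
    (hx' : LetterOK (G.typ u') x) :
    (⟨u, x, hx⟩ : VexV E₀ X ic tc G) = ⟨u', x, hx'⟩ := by
  subst h; rfl

variable (Y : Gph C)

/-- Forward vertex map for the main isomorphism. -/
def vFmain : VexV E₀ X ic tc (bary2 Y) → (bary2 (ersExpand X ic tc Y)).V
  | ⟨Sum.inl v, ⟨Sum.inr (Sum.inl _), _⟩⟩ => Sum.inl (Sum.inl v)
  | ⟨Sum.inl _, ⟨Sum.inl _, h⟩⟩ => h.elim
  | ⟨Sum.inl _, ⟨Sum.inr (Sum.inr _), h⟩⟩ => h.elim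
  | ⟨Sum.inr e, ⟨Sum.inr (Sum.inr ⟨c, Sum.inl w⟩), h⟩⟩ =>
      Sum.inl (Sum.inr ⟨e, (show c = Y.col e from h) ▸ w⟩)
  | ⟨Sum.inr e, ⟨Sum.inr (Sum.inr ⟨c, Sum.inr g⟩), h⟩⟩ =>
      Sum.inr ⟨e, (show c = Y.col e from h) ▸ g⟩
  | ⟨Sum.inr _, ⟨Sum.inl _, h⟩⟩ => h.elim
  | ⟨Sum.inr _, ⟨Sum.inr (Sum.inl _), h⟩⟩ => h.elim

/-- Backward vertex map for the main isomorphism. -/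
def vBmain : (bary2 (ersExpand X ic tc Y)).V → VexV E₀ X ic tc (bary2 Y)
  | Sum.inl (Sum.inl v) => ⟨Sum.inl v, ⟨Sum.inr (Sum.inl ()), trivial⟩⟩
  | Sum.inl (Sum.inr ⟨e, w⟩) =>
      ⟨Sum.inr e, ⟨Sum.inr (Sum.inr ⟨Y.col e, Sum.inl w⟩), rfl⟩⟩
  | Sum.inr ⟨e, g⟩ =>
      ⟨Sum.inr e, ⟨Sum.inr (Sum.inr ⟨Y.col e, Sum.inr g⟩), rfl⟩⟩

def vEmain : VexV E₀ X ic tc (bary2 Y) ≃ (bary2 (ersExpand X ic tc Y)).V where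
  toFun := vFmain E₀ X ic tc Y
  invFun := vBmain E₀ X ic tc Y
  left_inv := by
    rintro ⟨(v | e), ⟨(x | (x | ⟨c, (w | g)⟩)), h⟩⟩ <;>
      first
        | exact h.elim
        | rfl
        | (obtain rfl : c = Y.col e := h; rfl)
  right_inv := by
    rintro ((v | ⟨e, w⟩) | ⟨e, g⟩) <;> rfl

end MainAux
section MainAux2

variable {C : Type} (E₀ : Gph C) (X : C → Gph C) (ic tc : ∀ c, (X c).V)
  [∀ c, DecidableEq (X c).V]
  (P : ∀ c : C, (X c).Ed ⊕ (X c).Ed → Bool)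
  (Y : Gph C)

/-- Forward edge map for the main isomorphism. -/
def eFmain : VexEd E₀ X P (bary2 Y) → (bary2 (ersExpand X ic tc Y)).Ed
  | .e0 (Sum.inl _) hcol _ _ _ => by simp [bary2] at hcol
  | .e0 (Sum.inr _) hcol _ _ _ => by simp [bary2] at hcol
  | .eι (Sum.inl g0) c hcol _ _ (Sum.inl g) _ =>
      Sum.inl ⟨g0, (show c = Y.col g0 from
        (Sum.inl.inj (Option.some.inj hcol)).symm) ▸ g⟩
  | .eι (Sum.inl g0) c hcol _ _ (Sum.inr g) _ =>
      Sum.inr ⟨g0, (show c = Y.col g0 from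
        (Sum.inl.inj (Option.some.inj hcol)).symm) ▸ g⟩
  | .eι (Sum.inr _) _ hcol _ _ _ _ => by simp [bary2] at hcol
  | .eτ (Sum.inr g0) c hcol _ _ (Sum.inl g) _ =>
      Sum.inl ⟨g0, (show c = Y.col g0 from
        (Sum.inr.inj (Option.some.inj hcol)).symm) ▸ g⟩
  | .eτ (Sum.inr g0) c hcol _ _ (Sum.inr g) _ =>
      Sum.inr ⟨g0, (show c = Y.col g0 from
        (Sum.inr.inj (Option.some.inj hcol)).symm) ▸ g⟩
  | .eτ (Sum.inl _) _ hcol _ _ _ _ => by simp [bary2] at hcol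

/-- Backward edge map for the main isomorphism. -/
def eBmain : (bary2 (ersExpand X ic tc Y)).Ed → VexEd E₀ X P (bary2 Y)
  | Sum.inl ⟨e, g⟩ =>
      if hP : P (Y.col e) (Sum.inl g) = true then
        .eι (Sum.inl e) (Y.col e) rfl rfl rfl (Sum.inl g) hP
      else
        .eτ (Sum.inr e) (Y.col e) rfl rfl rfl (Sum.inl g)
          ((Bool.not_eq_true _) ▸ hP)
  | Sum.inr ⟨e, g⟩ =>
      if hP : P (Y.col e) (Sum.inr g) = true then
        .eι (Sum.inl e) (Y.col e) rfl rfl rfl (Sum.inr g) hP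
      else
        .eτ (Sum.inr e) (Y.col e) rfl rfl rfl (Sum.inr g)
          ((Bool.not_eq_true _) ▸ hP)

def eEmain : VexEd E₀ X P (bary2 Y) ≃ (bary2 (ersExpand X ic tc Y)).Ed where
  toFun := eFmain E₀ X ic tc P Y
  invFun := eBmain E₀ X ic tc P Y
  left_inv := by
    rintro (⟨(g0 | g0), hcol, hs, ht, f⟩ |
        ⟨(g0 | g0), c, hcol, hs, ht, (g | g), hf⟩ |
        ⟨(g0 | g0), c, hcol, hs, ht, (g | g), hf⟩) <;>
      try (exfalso; simp [bary2] at hcol; done)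
    all_goals
      obtain rfl : Y.col g0 = c := by simpa [bary2] using hcol
    all_goals
      simp only [eFmain, eBmain]
    · rw [dif_pos hf]
    · rw [dif_pos hf]
    · rw [dif_neg (by simp [hf])]
    · rw [dif_neg (by simp [hf])]
  right_inv := by
    rintro (⟨e, g⟩ | ⟨e, g⟩) <;> simp only [eBmain] <;> split_ifs <;> rfl

end MainAux2
section MainAux3

def VIso.symm {C : Type} {G H : VGraph C} (φ : VIso G H) : VIso H G where
  vEquiv := φ.vEquiv.symm
  eEquiv := φ.eEquiv.symm
  src_ok := fun e => by
    have := φ.src_ok (φ.eEquiv.symm e)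
    simp only [Equiv.apply_symm_apply] at this
    rw [this, Equiv.symm_apply_apply]
  tgt_ok := fun e => by
    have := φ.tgt_ok (φ.eEquiv.symm e)
    simp only [Equiv.apply_symm_apply] at this
    rw [this, Equiv.symm_apply_apply]
  col_ok := fun e => by
    have := φ.col_ok (φ.eEquiv.symm e)
    simpa using this.symm
  typ_ok := fun v => by
    have := φ.typ_ok (φ.vEquiv.symm v)
    simpa using this.symm

variable {C : Type} (E₀ : Gph C) (X : C → Gph C) (ic tc : ∀ c, (X c).V)
  [∀ c, DecidableEq (X c).V]
  (P : ∀ c : C, (X c).Ed ⊕ (X c).Ed → Bool) (Q0 : E₀.V ⊕ E₀.Ed → Bool)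
  (Y : Gph C)

def isoMainRev
    (hPι : ∀ c f, P c f = true →
      halfSrcV X c f ≠ Sum.inl (tc c) ∧ halfTgtV X c f ≠ Sum.inl (tc c))
    (hPτ : ∀ c f, P c f = false →
      halfSrcV X c f ≠ Sum.inl (ic c) ∧ halfTgtV X c f ≠ Sum.inl (ic c)) :
    VIso (bary2 (ersExpand X ic tc Y)) (vexpand2 E₀ X ic tc P Q0 (bary2 Y)) where
  vEquiv := ⟨vBmain E₀ X ic tc Y, vFmain E₀ X ic tc Y,
    (vEmain E₀ X ic tc Y).right_inv, (vEmain E₀ X ic tc Y).left_inv⟩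
  eEquiv := ⟨eBmain E₀ X ic tc P Y, eFmain E₀ X ic tc P Y,
    (eEmain E₀ X ic tc P Y).right_inv, (eEmain E₀ X ic tc P Y).left_inv⟩
  src_ok := by
    rintro (⟨e, g⟩ | ⟨e, g⟩) <;>
      (erw [Equiv.coe_fn_mk, Equiv.coe_fn_mk]; simp only [eBmain]) <;>
      split_ifs with hP
    · have hne := (hPι (Y.col e) (Sum.inl g) hP).1
      simp only [halfSrcV, ne_eq, Sum.inl.injEq] at hne
      simp only [vexpand2, bary2, ersExpand, ersAttach, attachι,
        halfSrcV, attachL]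
      split_ifs <;> simp_all [vBmain] <;> rfl
    · have hne := (hPτ (Y.col e) (Sum.inl g) (by simpa using hP)).1
      simp only [halfSrcV, ne_eq, Sum.inl.injEq] at hne
      simp only [vexpand2, bary2, ersExpand, ersAttach, attachτ,
        halfSrcV, attachL]
      split_ifs <;> simp_all [vBmain] <;> (congr 2 <;> exact dif_neg hne)
    · rfl
    · rfl
  tgt_ok := by
    rintro (⟨e, g⟩ | ⟨e, g⟩) <;>
      (erw [Equiv.coe_fn_mk, Equiv.coe_fn_mk]; simp only [eBmain]) <;>
      split_ifs with hP
    · rfl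
    · rfl
    · have hne := (hPι (Y.col e) (Sum.inr g) hP).2
      simp only [halfTgtV, ne_eq, Sum.inl.injEq] at hne
      simp only [vexpand2, bary2, ersExpand, ersAttach, attachι,
        halfTgtV, attachL]
      split_ifs <;> simp_all [vBmain] <;> rfl
    · have hne := (hPτ (Y.col e) (Sum.inr g) (by simpa using hP)).2
      simp only [halfTgtV, ne_eq, Sum.inl.injEq] at hne
      simp only [vexpand2, bary2, ersExpand, ersAttach, attachτ,
        halfTgtV, attachL]
      split_ifs <;> simp_all [vBmain] <;> (congr 2 <;> exact dif_neg hne)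
  col_ok := by
    rintro (⟨e, g⟩ | ⟨e, g⟩) <;>
      (erw [Equiv.coe_fn_mk]; simp only [eBmain]) <;>
      split_ifs with hP <;> rfl
  typ_ok := by
    rintro ((v | ⟨e, w⟩) | ⟨e, g⟩) <;> rfl

end MainAux3
section Aux4

def VIso.trans {C : Type} {G H K : VGraph C} (φ : VIso G H) (ψ : VIso H K) :
    VIso G K where
  vEquiv := φ.vEquiv.trans ψ.vEquiv
  eEquiv := φ.eEquiv.trans ψ.eEquiv
  src_ok := fun e => by simp only [Equiv.trans_apply, ψ.src_ok, φ.src_ok]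
  tgt_ok := fun e => by simp only [Equiv.trans_apply, ψ.tgt_ok, φ.tgt_ok]
  col_ok := fun e => by simp only [Equiv.trans_apply, ψ.col_ok, φ.col_ok]
  typ_ok := fun v => by simp only [Equiv.trans_apply, ψ.typ_ok, φ.typ_ok]

variable {C : Type} (E₀ : Gph C) (X : C → Gph C) (ic tc : ∀ c, (X c).V)
  [∀ c, DecidableEq (X c).V]
  (P : ∀ c : C, (X c).Ed ⊕ (X c).Ed → Bool) (Q0 : E₀.V ⊕ E₀.Ed → Bool)

def vF0 : VexV E₀ X ic tc (Gamma0 C) → (bary2 E₀).V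
  | ⟨_, ⟨Sum.inl w, _⟩⟩ => w
  | ⟨_, ⟨Sum.inr _, h⟩⟩ => h.elim

def eF0 : VexEd E₀ X P (Gamma0 C) → (bary2 E₀).Ed
  | .e0 _ _ _ _ f => f
  | .eι _ _ hcol _ _ _ _ => by simp [Gamma0] at hcol
  | .eτ _ _ hcol _ _ _ _ => by simp [Gamma0] at hcol

/-- Base case: the expansion of `Γ₀` is the subdivision of `E₀`. -/
def isoBaseRev : VIso (bary2 E₀) (vexpand2 E₀ X ic tc P Q0 (Gamma0 C)) where
  vEquiv := ⟨fun w => ⟨PUnit.unit, ⟨Sum.inl w, trivial⟩⟩, vF0 E₀ X ic tc,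
    fun w => rfl, by
      rintro ⟨⟨⟩, ⟨(w | x), h⟩⟩
      · rfl
      · exact h.elim⟩
  eEquiv := ⟨fun f => .e0 PUnit.unit rfl rfl rfl f, eF0 E₀ X P,
    fun f => rfl, by
      rintro (⟨⟨⟩, hcol, hs, ht, f⟩ | ⟨e, c, hcol, hs, ht, f, hf⟩ |
        ⟨e, c, hcol, hs, ht, f, hf⟩)
      · rfl
      · simp [Gamma0] at hcol
      · simp [Gamma0] at hcol⟩
  src_ok := by rintro (g | g) <;> rfl
  tgt_ok := by rintro (g | g) <;> rfl
  col_ok := by rintro (g | g) <;> rfl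
  typ_ok := by rintro (v | g) <;> rfl

variable {G H : VGraph C}

def congV (φ : VIso G H) : VexV E₀ X ic tc G → VexV E₀ X ic tc H :=
  fun p => ⟨φ.vEquiv p.1, ⟨p.2.1, (φ.typ_ok p.1).symm ▸ p.2.2⟩⟩

def congE (φ : VIso G H) : VexEd E₀ X P G → VexEd E₀ X P H
  | .e0 e hcol hs ht f =>
      .e0 (φ.eEquiv e) (by rw [φ.col_ok]; exact hcol)
        (by rw [φ.src_ok, φ.typ_ok]; exact hs)
        (by rw [φ.tgt_ok, φ.typ_ok]; exact ht) f
  | .eι e c hcol hs ht f hf =>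
      .eι (φ.eEquiv e) c (by rw [φ.col_ok]; exact hcol)
        (by rw [φ.src_ok, φ.typ_ok]; exact hs)
        (by rw [φ.tgt_ok, φ.typ_ok]; exact ht) f hf
  | .eτ e c hcol hs ht f hf =>
      .eτ (φ.eEquiv e) c (by rw [φ.col_ok]; exact hcol)
        (by rw [φ.src_ok, φ.typ_ok]; exact hs)
        (by rw [φ.tgt_ok, φ.typ_ok]; exact ht) f hf

theorem e0_eq {e e' : G.Ed} (h : e = e') (f : E₀.Ed ⊕ E₀.Ed)
    (hcol hs ht hcol' hs' ht') :
    (VexEd.e0 e hcol hs ht f : VexEd E₀ X P G) = .e0 e' hcol' hs' ht' f := by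
  subst h; rfl

theorem eι_eq {e e' : G.Ed} (h : e = e') (c : C) (f : (X c).Ed ⊕ (X c).Ed)
    (hf : P c f = true) (hcol hs ht hcol' hs' ht') :
    (VexEd.eι e c hcol hs ht f hf : VexEd E₀ X P G) =
      .eι e' c hcol' hs' ht' f hf := by
  subst h; rfl

theorem eτ_eq {e e' : G.Ed} (h : e = e') (c : C) (f : (X c).Ed ⊕ (X c).Ed)
    (hf : P c f = false) (hcol hs ht hcol' hs' ht') :
    (VexEd.eτ e c hcol hs ht f hf : VexEd E₀ X P G) =
      .eτ e' c hcol' hs' ht' f hf := by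
  subst h; rfl

theorem vexV_eq_of {G : VGraph C} {p q : VexV E₀ X ic tc G}
    (h1 : p.1 = q.1) (h2 : p.2.1 = q.2.1) : p = q := by
  rcases p with ⟨u, x, hx⟩
  rcases q with ⟨u', x', hx'⟩
  dsimp at h1 h2
  subst h1
  subst h2
  rfl

theorem congV_attach0 (φ : VIso G H) (e : G.Ed) (hs ht hs' ht')
    (w : E₀.V ⊕ E₀.Ed) :
    attach0 E₀ X ic tc Q0 (G := H) (φ.eEquiv e) hs' ht' w =
      congV E₀ X ic tc φ (attach0 E₀ X ic tc Q0 e hs ht w) := by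
  refine vexV_eq_of E₀ X ic tc ?_ ?_ <;> simp only [attach0, congV]
  split_ifs
  · exact φ.src_ok e
  · exact φ.tgt_ok e
  · rfl

theorem attachι_pos {G : VGraph C} (e : G.Ed) (c : C) (hs ht) (x : (X c).V)
    (h : x = ic c ∨ x = tc c) :
    attachι E₀ X ic tc e c hs ht (Sum.inl x) =
      ⟨G.src e, ⟨attachL E₀ X ic tc c x, by
        rw [hs]; exact letterOK_attachL_V E₀ X ic tc c x h⟩⟩ := by
  simp only [attachι]
  exact dif_pos h

theorem attachι_neg {G : VGraph C} (e : G.Ed) (c : C) (hs ht) (x : (X c).V)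
    (h : ¬(x = ic c ∨ x = tc c)) :
    attachι E₀ X ic tc e c hs ht (Sum.inl x) =
      ⟨G.tgt e, ⟨attachL E₀ X ic tc c x, by
        rw [ht]; exact letterOK_attachL E₀ X ic tc c x h⟩⟩ := by
  simp only [attachι]
  exact dif_neg h

theorem attachτ_pos {G : VGraph C} (e : G.Ed) (c : C) (hs ht) (x : (X c).V)
    (h : x = ic c ∨ x = tc c) :
    attachτ E₀ X ic tc e c hs ht (Sum.inl x) =
      ⟨G.tgt e, ⟨attachL E₀ X ic tc c x, by
        rw [ht]; exact letterOK_attachL_V E₀ X ic tc c x h⟩⟩ := by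
  simp only [attachτ]
  exact dif_pos h

theorem attachτ_neg {G : VGraph C} (e : G.Ed) (c : C) (hs ht) (x : (X c).V)
    (h : ¬(x = ic c ∨ x = tc c)) :
    attachτ E₀ X ic tc e c hs ht (Sum.inl x) =
      ⟨G.src e, ⟨attachL E₀ X ic tc c x, by
        rw [hs]; exact letterOK_attachL E₀ X ic tc c x h⟩⟩ := by
  simp only [attachτ]
  exact dif_neg h

theorem congV_attachι (φ : VIso G H) (e : G.Ed) (c : C) (hs ht hs' ht')
    (w : (X c).V ⊕ (X c).Ed) :
    attachι E₀ X ic tc (G := H) (φ.eEquiv e) c hs' ht' w =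
      congV E₀ X ic tc φ (attachι E₀ X ic tc e c hs ht w) := by
  rcases w with x | g
  · by_cases h : x = ic c ∨ x = tc c
    · rw [attachι_pos E₀ X ic tc (φ.eEquiv e) c hs' ht' x h,
        attachι_pos E₀ X ic tc e c hs ht x h]
      exact vexV_mk_eq E₀ X ic tc (φ.src_ok e) _ _ _
    · rw [attachι_neg E₀ X ic tc (φ.eEquiv e) c hs' ht' x h,
        attachι_neg E₀ X ic tc e c hs ht x h]
      exact vexV_mk_eq E₀ X ic tc (φ.tgt_ok e) _ _ _
  · exact vexV_mk_eq E₀ X ic tc (φ.tgt_ok e) _ _ _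

theorem congV_attachτ (φ : VIso G H) (e : G.Ed) (c : C) (hs ht hs' ht')
    (w : (X c).V ⊕ (X c).Ed) :
    attachτ E₀ X ic tc (G := H) (φ.eEquiv e) c hs' ht' w =
      congV E₀ X ic tc φ (attachτ E₀ X ic tc e c hs ht w) := by
  rcases w with x | g
  · by_cases h : x = ic c ∨ x = tc c
    · rw [attachτ_pos E₀ X ic tc (φ.eEquiv e) c hs' ht' x h,
        attachτ_pos E₀ X ic tc e c hs ht x h]
      exact vexV_mk_eq E₀ X ic tc (φ.tgt_ok e) _ _ _
    · rw [attachτ_neg E₀ X ic tc (φ.eEquiv e) c hs' ht' x h,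
        attachτ_neg E₀ X ic tc e c hs ht x h]
      exact vexV_mk_eq E₀ X ic tc (φ.src_ok e) _ _ _
  · exact vexV_mk_eq E₀ X ic tc (φ.src_ok e) _ _ _

/-- `vexpand2` preserves isomorphism. -/
def isoCong (φ : VIso G H) :
    VIso (vexpand2 E₀ X ic tc P Q0 G) (vexpand2 E₀ X ic tc P Q0 H) where
  vEquiv := ⟨congV E₀ X ic tc φ, congV E₀ X ic tc φ.symm, by
      rintro ⟨u, x, hx⟩
      exact vexV_mk_eq E₀ X ic tc (φ.vEquiv.symm_apply_apply u) x _ _, by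
      rintro ⟨u, x, hx⟩
      exact vexV_mk_eq E₀ X ic tc (φ.vEquiv.apply_symm_apply u) x _ _⟩
  eEquiv := ⟨congE E₀ X P φ, congE E₀ X P φ.symm, by
      rintro (⟨e, hcol, hs, ht, f⟩ | ⟨e, c, hcol, hs, ht, f, hf⟩ |
        ⟨e, c, hcol, hs, ht, f, hf⟩)
      · exact e0_eq E₀ X P (φ.eEquiv.symm_apply_apply e) f _ _ _ _ _ _
      · exact eι_eq E₀ X P (φ.eEquiv.symm_apply_apply e) c f hf _ _ _ _ _ _
      · exact eτ_eq E₀ X P (φ.eEquiv.symm_apply_apply e) c f hf _ _ _ _ _ _, by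
      rintro (⟨e, hcol, hs, ht, f⟩ | ⟨e, c, hcol, hs, ht, f, hf⟩ |
        ⟨e, c, hcol, hs, ht, f, hf⟩)
      · exact e0_eq E₀ X P (φ.eEquiv.apply_symm_apply e) f _ _ _ _ _ _
      · exact eι_eq E₀ X P (φ.eEquiv.apply_symm_apply e) c f hf _ _ _ _ _ _
      · exact eτ_eq E₀ X P (φ.eEquiv.apply_symm_apply e) c f hf _ _ _ _ _ _⟩
  src_ok := by
    rintro (⟨e, hcol, hs, ht, f⟩ | ⟨e, c, hcol, hs, ht, f, hf⟩ |
        ⟨e, c, hcol, hs, ht, f, hf⟩)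
    · exact congV_attach0 E₀ X ic tc Q0 φ e hs ht
        (by rw [φ.src_ok, φ.typ_ok]; exact hs)
        (by rw [φ.tgt_ok, φ.typ_ok]; exact ht) _
    · exact congV_attachι E₀ X ic tc φ e c hs ht
        (by rw [φ.src_ok, φ.typ_ok]; exact hs)
        (by rw [φ.tgt_ok, φ.typ_ok]; exact ht) _
    · exact congV_attachτ E₀ X ic tc φ e c hs ht
        (by rw [φ.src_ok, φ.typ_ok]; exact hs)
        (by rw [φ.tgt_ok, φ.typ_ok]; exact ht) _
  tgt_ok := by
    rintro (⟨e, hcol, hs, ht, f⟩ | ⟨e, c, hcol, hs, ht, f, hf⟩ |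
        ⟨e, c, hcol, hs, ht, f, hf⟩)
    · exact congV_attach0 E₀ X ic tc Q0 φ e hs ht
        (by rw [φ.src_ok, φ.typ_ok]; exact hs)
        (by rw [φ.tgt_ok, φ.typ_ok]; exact ht) _
    · exact congV_attachι E₀ X ic tc φ e c hs ht
        (by rw [φ.src_ok, φ.typ_ok]; exact hs)
        (by rw [φ.tgt_ok, φ.typ_ok]; exact ht) _
    · exact congV_attachτ E₀ X ic tc φ e c hs ht
        (by rw [φ.src_ok, φ.typ_ok]; exact hs)
        (by rw [φ.tgt_ok, φ.typ_ok]; exact ht) _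
  col_ok := by
    rintro (⟨e, hcol, hs, ht, (g | g)⟩ | ⟨e, c, hcol, hs, ht, (g | g), hf⟩ |
        ⟨e, c, hcol, hs, ht, (g | g), hf⟩) <;> rfl
  typ_ok := by
    rintro ⟨u, x, hx⟩; rfl

end Aux4
/-- the VERS expansion of the barycentric subdivision of a
`C`-colored graph is the barycentric subdivision of its full ERS expansion;
consequently, for every `n ≥ 1`, the `n`-th VERS expansion `Γₙ` of `R_Ɛ`
is the barycentric subdivision of the `n`-th graph `Ɛₙ` of the full
expansion sequence of the ERS. -/
theorem vers_expansion_is_bary_of_ers_expansion {C : Type}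
    (E₀ : Gph C) (X : C → Gph C) (ic tc : ∀ c, (X c).V)
    [∀ c, DecidableEq (X c).V]
    (P : ∀ c : C, (X c).Ed ⊕ (X c).Ed → Bool) (Q0 : E₀.V ⊕ E₀.Ed → Bool)
    -- `R_{c_ι}` omits the terminal vertex `τ_c` and `R_{c_τ}` omits `ι_c`:
    (hPι : ∀ c f, P c f = true →
      halfSrcV X c f ≠ Sum.inl (tc c) ∧ halfTgtV X c f ≠ Sum.inl (tc c))
    (hPτ : ∀ c f, P c f = false →
      halfSrcV X c f ≠ Sum.inl (ic c) ∧ halfTgtV X c f ≠ Sum.inl (ic c)) :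
    (∀ Y : Gph C,
      Nonempty (VIso (vexpand2 E₀ X ic tc P Q0 (bary2 Y))
        (bary2 (ersExpand X ic tc Y)))) ∧
    (∀ n : ℕ,
      Nonempty (VIso (vexpandIter E₀ X ic tc P Q0 (n + 1) (Gamma0 C))
        (bary2 (ersIter E₀ X ic tc n)))) := by
  constructor
  · intro Y
    exact ⟨(isoMainRev E₀ X ic tc P Q0 Y hPι hPτ).symm⟩
  · intro n
    induction n with
    | zero =>
        exact ⟨(isoBaseRev E₀ X ic tc P Q0).symm⟩
    | succ n ih =>
        obtain ⟨ψ⟩ := ih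
        exact ⟨(isoCong E₀ X ic tc P Q0 ψ).trans
          ((isoMainRev E₀ X ic tc P Q0 (ersIter E₀ X ic tc n) hPι hPτ).symm)⟩
end

section
/- Let Ɛ be an expanding ERS and R_Ɛ its associated VERS. If α = a_1a_2… and β = b_1b_2… are elements of the symbol space that are asymptotically equivalent in the history graph, then there exists N ∈ {0, 1, 2} such that the distance in Γ_k between the prefixes a_1…a_k and b_1…b_k equals N for all sufficiently large k. -/
/-- The barycentric subdivision of a colored graph, as a simple graph (whose
vertices are the vertices and the edges of the original graph). -/
def barySG {C : Type} (Y : Gph C) : SimpleGraph (Y.V ⊕ Y.Ed) where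
  Adj a b := a ≠ b ∧
    ((∃ v e, a = Sum.inl v ∧ b = Sum.inr e ∧ (Y.src e = v ∨ Y.tgt e = v)) ∨
      (∃ v e, b = Sum.inl v ∧ a = Sum.inr e ∧ (Y.src e = v ∨ Y.tgt e = v)))
  symm := ⟨by rintro a b ⟨h, h'⟩; exact ⟨h.symm, h'.symm⟩⟩
  loopless := ⟨by rintro a ⟨h, -⟩; exact h rfl⟩

section Proof18

open SimpleGraph

variable {C : Type} {X : C → Gph C} {ic tc : ∀ c, (X c).V} [∀ c, DecidableEq (X c).V]

/-- Projection of vertices of `Γ_{k+1}` to vertices of `Γ_k`. -/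
def ersProj (Y : Gph C) :
    ((ersExpand X ic tc Y).V ⊕ (ersExpand X ic tc Y).Ed) → (Y.V ⊕ Y.Ed)
  | Sum.inl (Sum.inl v) => Sum.inl v
  | Sum.inl (Sum.inr p) => Sum.inr p.1
  | Sum.inr p => Sum.inr p.1

lemma attach_cases (Y : Gph C) (e : Y.Ed) (w : (X (Y.col e)).V) :
    (w = ic (Y.col e) ∧ ersAttach X ic tc Y e w = Sum.inl (Y.src e)) ∨
    ((w = tc (Y.col e) ∧ w ≠ ic (Y.col e)) ∧ ersAttach X ic tc Y e w = Sum.inl (Y.tgt e)) ∨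
    (∃ h, ersAttach X ic tc Y e w = Sum.inr ⟨e, w, h⟩) := by
  unfold ersAttach
  split
  · exact Or.inl ⟨‹_›, rfl⟩
  · split
    · exact Or.inr (Or.inl ⟨⟨‹_›, ‹_›⟩, rfl⟩)
    · exact Or.inr (Or.inr ⟨⟨‹_›, ‹_›⟩, rfl⟩)

lemma bary_adj_of_end {Y : Gph C} {v : Y.V} {e : Y.Ed} (h : Y.src e = v ∨ Y.tgt e = v) :
    (barySG Y).Adj (Sum.inl v) (Sum.inr e) :=
  ⟨by simp, Or.inl ⟨v, e, rfl, rfl, h⟩⟩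

lemma proj_attach {Y : Gph C} {e : Y.Ed} {w : (X (Y.col e)).V} {v : (ersExpand X ic tc Y).V}
    (h : ersAttach X ic tc Y e w = v) :
    (barySG Y).Adj (ersProj Y (Sum.inl v)) (Sum.inr e) ∨ ersProj Y (Sum.inl v) = Sum.inr e := by
  rcases attach_cases (X := X) (ic := ic) (tc := tc) Y e w with ⟨_, ha⟩ | ⟨_, ha⟩ | ⟨_, ha⟩ <;>
    rw [ha] at h <;> subst h
  · exact Or.inl (bary_adj_of_end (Or.inl rfl))
  · exact Or.inl (bary_adj_of_end (Or.inr rfl))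
  · exact Or.inr rfl

lemma proj_adj_core {Y : Gph C} (v : (ersExpand X ic tc Y).V) (F : (ersExpand X ic tc Y).Ed)
    (hend : (ersExpand X ic tc Y).src F = v ∨ (ersExpand X ic tc Y).tgt F = v) :
    (barySG Y).Adj (ersProj Y (Sum.inl v)) (ersProj Y (Sum.inr F)) ∨
      ersProj Y (Sum.inl v) = ersProj Y (Sum.inr F) := by
  obtain ⟨e, f⟩ := F
  rcases hend with h | h
  · exact proj_attach (X := X) h
  · exact proj_attach (X := X) h

lemma proj_adj {Y : Gph C} {a b : (ersExpand X ic tc Y).V ⊕ (ersExpand X ic tc Y).Ed}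
    (h : (barySG (ersExpand X ic tc Y)).Adj a b) :
    (barySG Y).Adj (ersProj Y a) (ersProj Y b) ∨ ersProj Y a = ersProj Y b := by
  obtain ⟨-, h⟩ := h
  rcases h with ⟨v, F, rfl, rfl, hend⟩ | ⟨v, F, rfl, rfl, hend⟩
  · rcases proj_adj_core v F hend with h | h
    · exact Or.inl h
    · exact Or.inr h
  · rcases proj_adj_core v F hend with h | h
    · exact Or.inl h.symm
    · exact Or.inr h.symm

lemma proj_walk {Y : Gph C} {a b : (ersExpand X ic tc Y).V ⊕ (ersExpand X ic tc Y).Ed}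
    (p : (barySG (ersExpand X ic tc Y)).Walk a b) :
    ∃ q : (barySG Y).Walk (ersProj Y a) (ersProj Y b), q.length ≤ p.length := by
  induction p with
  | nil => exact ⟨.nil, le_refl _⟩
  | cons h p ih =>
    obtain ⟨q, hq⟩ := ih
    rcases proj_adj h with h' | h'
    · exact ⟨.cons h' q, by simpa using Nat.succ_le_succ hq⟩
    · exact ⟨q.copy h'.symm rfl, by
        simp only [SimpleGraph.Walk.length_copy, SimpleGraph.Walk.length_cons]; omega⟩

lemma step_walk {Y : Gph C} {a b : (ersExpand X ic tc Y).V ⊕ (ersExpand X ic tc Y).Ed}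
    {c : Y.V ⊕ Y.Ed} (h : (barySG (ersExpand X ic tc Y)).Adj a b)
    (q : (barySG Y).Walk (ersProj Y b) c) :
    ∃ q' : (barySG Y).Walk (ersProj Y a) c, q'.length ≤ q.length + 1 := by
  rcases proj_adj h with h' | h'
  · exact ⟨.cons h' q, by simp⟩
  · exact ⟨q.copy h'.symm rfl, by rw [SimpleGraph.Walk.length_copy]; omega⟩

lemma bary_adj_inr {Y : Gph C} {A : Y.Ed} {x : Y.V ⊕ Y.Ed} (h : (barySG Y).Adj (Sum.inr A) x) :
    ∃ v : Y.V, x = Sum.inl v := by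
  obtain ⟨-, h⟩ := h
  rcases h with ⟨v, e, h1, h2, h3⟩ | ⟨v, e, h1, h2, h3⟩
  · exact absurd h1 (by simp)
  · exact ⟨v, h1⟩

lemma bary_adj_inl {Y : Gph C} {u : Y.V} {x : Y.V ⊕ Y.Ed} (h : (barySG Y).Adj (Sum.inl u) x) :
    ∃ e : Y.Ed, x = Sum.inr e ∧ (Y.src e = u ∨ Y.tgt e = u) := by
  obtain ⟨-, h⟩ := h
  rcases h with ⟨v, e, h1, h2, h3⟩ | ⟨v, e, h1, h2, h3⟩
  · obtain rfl : u = v := by simpa using h1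
    exact ⟨e, h2, h3⟩
  · exact absurd h2 (by simp)

lemma old_endpoint {Y : Gph C} {e : Y.Ed} {f : (X (Y.col e)).Ed}
    {u : (ersExpand X ic tc Y).V}
    (h : ersAttach X ic tc Y e ((X (Y.col e)).src f) = u ∨
         ersAttach X ic tc Y e ((X (Y.col e)).tgt f) = u)
    (hs : ersProj Y (Sum.inl u) ≠ Sum.inr e) :
    (((X (Y.col e)).src f = ic (Y.col e) ∨ (X (Y.col e)).tgt f = ic (Y.col e)) ∧
        u = Sum.inl (Y.src e)) ∨
    ((((X (Y.col e)).src f = tc (Y.col e) ∧ (X (Y.col e)).src f ≠ ic (Y.col e)) ∨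
      ((X (Y.col e)).tgt f = tc (Y.col e) ∧ (X (Y.col e)).tgt f ≠ ic (Y.col e))) ∧
        u = Sum.inl (Y.tgt e)) := by
  rcases h with h | h
  · rcases attach_cases (X := X) (ic := ic) (tc := tc) Y e ((X (Y.col e)).src f) with
      ⟨hw, ha⟩ | ⟨hw, ha⟩ | ⟨hh, ha⟩ <;> rw [ha] at h <;> subst h
    · exact Or.inl ⟨Or.inl hw, rfl⟩
    · exact Or.inr ⟨Or.inl hw, rfl⟩
    · exact absurd rfl hs
  · rcases attach_cases (X := X) (ic := ic) (tc := tc) Y e ((X (Y.col e)).tgt f) with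
      ⟨hw, ha⟩ | ⟨hw, ha⟩ | ⟨hh, ha⟩ <;> rw [ha] at h <;> subst h
    · exact Or.inl ⟨Or.inr hw, rfl⟩
    · exact Or.inr ⟨Or.inr hw, rfl⟩
    · exact absurd rfl hs

/-- Key shortening lemma: a path of length at least 3 between two edge-vertices
in `Γ_{k+1}` projects to a strictly shorter walk in `Γ_k`. -/
lemma shorten {Y : Gph C}
    (hno : ∀ c, ∀ g : (X c).Ed,
      ¬ (((X c).src g = ic c ∧ (X c).tgt g = tc c) ∨
        ((X c).src g = tc c ∧ (X c).tgt g = ic c)))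
    {A B : (ersExpand X ic tc Y).Ed}
    (p : (barySG (ersExpand X ic tc Y)).Walk (Sum.inr A) (Sum.inr B))
    (hp : p.IsPath) (h3 : 3 ≤ p.length) :
    ∃ q : (barySG Y).Walk (Sum.inr A.1) (Sum.inr B.1), q.length < p.length := by
  cases p with
  | nil => simp at h3
  | cons h₁ p =>
    obtain ⟨u₁, rfl⟩ := bary_adj_inr h₁
    cases p with
    | cons h₂ p =>
      obtain ⟨F, rfl, hend₂⟩ := bary_adj_inl h₂
      cases p with
      | nil => simp [SimpleGraph.Walk.length_cons] at h3
      | cons h₃ p₃ =>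
        obtain ⟨u₂, rfl⟩ := bary_adj_inr h₃
        have hlen : (SimpleGraph.Walk.cons h₁
            (SimpleGraph.Walk.cons h₂ (SimpleGraph.Walk.cons h₃ p₃))).length
            = p₃.length + 3 := by simp [SimpleGraph.Walk.length_cons]
        rw [hlen]
        by_cases s₂ : ersProj Y (Sum.inl u₁) = ersProj Y (Sum.inr F)
        · -- stall at the second step
          obtain ⟨q, hq⟩ := proj_walk (SimpleGraph.Walk.cons h₃ p₃)
          obtain ⟨q', hq'⟩ := step_walk h₁ (q.copy s₂.symm rfl)
          rw [SimpleGraph.Walk.length_copy] at hq'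
          refine ⟨q', ?_⟩
          simp only [SimpleGraph.Walk.length_cons] at hq
          exact lt_of_le_of_lt hq' (by omega)
        · by_cases s₃ : ersProj Y (Sum.inr F) = ersProj Y (Sum.inl u₂)
          · -- stall at the third step
            obtain ⟨q, hq⟩ := proj_walk p₃
            obtain ⟨q', hq'⟩ := step_walk h₂ (q.copy s₃.symm rfl)
            rw [SimpleGraph.Walk.length_copy] at hq'
            obtain ⟨q'', hq''⟩ := step_walk h₁ q'
            exact ⟨q'', lt_of_le_of_lt hq'' (by omega)⟩
          · -- no stall: contradiction with the expanding hypothesis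
            exfalso
            obtain ⟨e, f⟩ := F
            have hne12 : u₁ ≠ u₂ := by
              have h1' := ((SimpleGraph.Walk.cons_isPath_iff _ _).mp hp).1
              have h2' := ((SimpleGraph.Walk.cons_isPath_iff _ _).mp h1').2
              intro hEq
              apply h2'
              rw [SimpleGraph.Walk.support_cons, hEq]
              exact List.mem_cons_of_mem _ p₃.start_mem_support
            have hend₂' : ersAttach X ic tc Y e ((X (Y.col e)).src f) = u₁ ∨
                ersAttach X ic tc Y e ((X (Y.col e)).tgt f) = u₁ := hend₂
            obtain ⟨F', hF', hend₃⟩ := bary_adj_inl h₃.symm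
            obtain rfl : F' = (⟨e, f⟩ : (ersExpand X ic tc Y).Ed) := by
              exact (Sum.inr_injective hF').symm
            have hend₃' : ersAttach X ic tc Y e ((X (Y.col e)).src f) = u₂ ∨
                ersAttach X ic tc Y e ((X (Y.col e)).tgt f) = u₂ := hend₃
            rcases old_endpoint hend₂' s₂ with ⟨P₁, rfl⟩ | ⟨P₁, rfl⟩ <;>
              rcases old_endpoint hend₃' (fun hh => s₃ hh.symm) with ⟨P₂, rfl⟩ | ⟨P₂, rfl⟩
            · exact hne12 rfl
            · rcases P₁ with h1 | h1 <;> rcases P₂ with ⟨h2, h2'⟩ | ⟨h2, h2'⟩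
              · exact h2' h1
              · exact hno _ f (Or.inl ⟨h1, h2⟩)
              · exact hno _ f (Or.inr ⟨h2, h1⟩)
              · exact h2' h1
            · rcases P₂ with h1 | h1 <;> rcases P₁ with ⟨h2, h2'⟩ | ⟨h2, h2'⟩
              · exact h2' h1
              · exact hno _ f (Or.inl ⟨h1, h2⟩)
              · exact hno _ f (Or.inr ⟨h2, h1⟩)
              · exact h2' h1
            · exact hne12 rfl

end Proof18

/-- for an expanding ERS, if two elements of the symbol space
are asymptotically equivalent (their equal-length prefixes, viewed as
vertices of the level graphs `Γ_k` — the barycentric subdivisions of the full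
expansions `Ɛ_k` — stay at uniformly bounded distance), then their prefix
distances are eventually constant, equal to some `N ∈ {0, 1, 2}`. -/
theorem symbol_space_asymptotic_distance {C : Type}
    (E₀ : Gph C) (X : C → Gph C) (ic tc : ∀ c, (X c).V)
    [∀ c, DecidableEq (X c).V]
    (hexp : ExpandingERS E₀ X ic tc)
    -- an element of the symbol space: a compatible sequence of edges
    (α β : ∀ k, (ersIter E₀ X ic tc k).Ed)
    (hα : ∀ k, (α (k + 1)).1 = α k) (hβ : ∀ k, (β (k + 1)).1 = β k)
    (hasymp : ∃ D : ℕ, ∀ k,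
      (barySG (ersIter E₀ X ic tc k)).dist (Sum.inr (α k)) (Sum.inr (β k)) ≤ D) :
    ∃ N : ℕ, N ≤ 2 ∧ ∃ M : ℕ, ∀ k, M ≤ k →
      (barySG (ersIter E₀ X ic tc k)).dist (Sum.inr (α k)) (Sum.inr (β k)) = N := by
  classical
  obtain ⟨D, hD⟩ := hasymp
  set d : ℕ → ℕ := fun k =>
    (barySG (ersIter E₀ X ic tc k)).dist (Sum.inr (α k)) (Sum.inr (β k)) with hdd
  have eα : ∀ k, ersProj (ersIter E₀ X ic tc k) (Sum.inr (α (k + 1))) = Sum.inr (α k) :=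
    fun k => congrArg Sum.inr (hα k)
  have eβ : ∀ k, ersProj (ersIter E₀ X ic tc k) (Sum.inr (β (k + 1))) = Sum.inr (β k) :=
    fun k => congrArg Sum.inr (hβ k)
  have push : ∀ k, (barySG (ersIter E₀ X ic tc (k + 1))).Reachable
      (Sum.inr (α (k + 1))) (Sum.inr (β (k + 1))) →
      (barySG (ersIter E₀ X ic tc k)).Reachable (Sum.inr (α k)) (Sum.inr (β k)) := by
    intro k h
    obtain ⟨p⟩ := h
    obtain ⟨q, -⟩ := proj_walk (X := X) (ic := ic) (tc := tc) (Y := ersIter E₀ X ic tc k) p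
    exact ⟨q.copy (eα k) (eβ k)⟩
  by_cases hre : ∀ k, (barySG (ersIter E₀ X ic tc k)).Reachable
      (Sum.inr (α k)) (Sum.inr (β k))
  · have mono : ∀ k, d k ≤ d (k + 1) := by
      intro k
      obtain ⟨p, hp, hl⟩ := (hre (k + 1)).exists_path_of_dist
      obtain ⟨q, hq⟩ := proj_walk (X := X) (ic := ic) (tc := tc) (Y := ersIter E₀ X ic tc k) p
      calc d k ≤ (q.copy (eα k) (eβ k)).length := SimpleGraph.dist_le _
        _ = q.length := SimpleGraph.Walk.length_copy _ _ _
        _ ≤ p.length := hq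
        _ = d (k + 1) := hl
    have hmono : Monotone d := monotone_nat_of_le_succ mono
    have hbdd : BddAbove (Set.range d) := ⟨D, by rintro x ⟨k, rfl⟩; exact hD k⟩
    obtain ⟨M, hM⟩ := Nat.sSup_mem (Set.range_nonempty d) hbdd
    have hconst : ∀ k, M ≤ k → d k = d M := by
      intro k hk
      exact le_antisymm (hM ▸ le_csSup hbdd ⟨k, rfl⟩) (hmono hk)
    refine ⟨d M, ?_, M, hconst⟩
    by_contra h2
    have h3 : 3 ≤ d M := by omega
    have hMs : d (M + 1) = d M := hconst (M + 1) (Nat.le_succ M)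
    obtain ⟨p, hp, hl⟩ := (hre (M + 1)).exists_path_of_dist
    obtain ⟨q, hq⟩ := shorten (X := X) (ic := ic) (tc := tc) (Y := ersIter E₀ X ic tc M)
      hexp.2.2.2 p hp (by show 3 ≤ p.length; have hplen : p.length = d (M + 1) := hl; omega)
    have hplen : p.length = d (M + 1) := hl
    have : d M ≤ (q.copy (eα M) (eβ M)).length := SimpleGraph.dist_le _
    replace this : d M ≤ q.length := this.trans (SimpleGraph.Walk.length_copy _ _ _).le
    exact absurd this (not_le.mpr (lt_of_lt_of_eq hq (hplen.trans hMs)))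
  · push_neg at hre
    obtain ⟨k0, hk0⟩ := hre
    have hstay : ∀ j, ¬ (barySG (ersIter E₀ X ic tc (k0 + j))).Reachable
        (Sum.inr (α (k0 + j))) (Sum.inr (β (k0 + j))) := by
      intro j
      induction j with
      | zero => simpa using hk0
      | succ j ih => exact fun h => ih (push _ h)
    refine ⟨0, by norm_num, k0, fun k hk => ?_⟩
    have h' := hstay (k - k0)
    rw [Nat.add_sub_cancel' hk] at h'
    exact SimpleGraph.dist_eq_zero_of_not_reachable h'
end
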